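/- For the ASI-SSP(3',3',2) family A(delta) = [[0,0,0,0],[0,5/6,0,0],[0,1/(3 delta) - 5/6, 5/6, 0],[0,(1+6 delta)/(3(2-5 delta)), -17 delta/(6(2-5 delta)), 5/6]] with delta ≠ 0 and delta ≠ 2/5, the last row always sums to 1, and for every such delta at least one entry of A(delta) is negative (so the scheme can never have all nonnegative coefficients). -/

import Mathlib

noncomputable def A3p3p2 (δ : ℝ) : Matrix (Fin 4) (Fin 4) ℝ :=
  !![0, 0, 0, 0;
     0, 5/6, 0, 0;
     0, 1/(3*δ) - 5/6, 5/6, 0;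
     0, (1 + 6*δ)/(3*(2 - 5*δ)), -17*δ/(6*(2 - 5*δ)), 5/6]

/-- For every admissible δ, the last row of A(δ) sums to 1, and A(δ) has a
negative entry. -/
theorem asiSSP3p3p2_properties (δ : ℝ) (hδ : δ ≠ 0) (hδ' : δ ≠ 2/5) :
    (∑ j, A3p3p2 δ 3 j) = 1 ∧ (∃ i j, A3p3p2 δ i j < 0) := by
  have hden : 2 - 5*δ ≠ 0 := by
    intro h; apply hδ'; linarith
  have e21 : A3p3p2 δ 2 1 = 1/(3*δ) - 5/6 := by simp [A3p3p2]
  have e31 : A3p3p2 δ 3 1 = (1 + 6*δ)/(3*(2 - 5*δ)) := by simp [A3p3p2]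
  have e32 : A3p3p2 δ 3 2 = -17*δ/(6*(2 - 5*δ)) := by simp [A3p3p2]
  constructor
  · simp [A3p3p2, Fin.sum_univ_four]
    have hden2 : (2 - δ*5) ≠ 0 := by intro h; apply hδ'; linarith
    field_simp
    ring
  · rcases lt_trichotomy δ 0 with h0 | h0 | h0
    · refine ⟨2, 1, ?_⟩
      rw [e21]
      have : 1/(3*δ) < 0 := div_neg_of_pos_of_neg one_pos (by linarith)
      linarith
    · exact absurd h0 hδ
    · rcases lt_or_gt_of_ne hδ' with h1 | h1
      · refine ⟨3, 2, ?_⟩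
        rw [e32]
        apply div_neg_of_neg_of_pos <;> nlinarith
      · refine ⟨3, 1, ?_⟩
        rw [e31]
        apply div_neg_of_pos_of_neg <;> nlinarith
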